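/- For an odd prime power q, the number of conjugacy classes of SL(2, F_q) is q + 4. -/

import Mathlib

open Matrix
namespace SL2Conj
set_option linter.unusedSectionVars false
variable {F : Type*} [Field F] [Fintype F]
local notation "SL2" => Matrix.SpecialLinearGroup (Fin 2) F

lemma isConj_of_semiconj (X A B : SL2) (h : X * A = B * X) : IsConj A B :=
  isConj_iff.2 ⟨X, by rw [h, mul_inv_cancel_right]⟩

def M (t ε : F) (hε : ε ≠ 0) : SL2 :=
  ⟨!![0, -ε; ε⁻¹, t], by rw [Matrix.det_fin_two_of]; field_simp; ring⟩

lemma det_A (A : SL2) : (A:Matrix (Fin 2) (Fin 2) F) 0 0 * A.1 1 1 - A.1 0 1 * A.1 1 0 = 1 := by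
  rw [← Matrix.det_fin_two]; exact A.2

lemma conj_M_of_sq (A : SL2) {μ ε : F} (hμ : μ ≠ 0) (hε : ε ≠ 0)
    (hc : (A : Matrix (Fin 2) (Fin 2) F) 1 0 = μ ^ 2 * ε) :
    IsConj (M (A.1 0 0 + A.1 1 1) ε hε) A := by
  set a := A.1 0 0; set b := A.1 0 1; set c := A.1 1 0; set d := A.1 1 1
  have hdet : a * d - b * c = 1 := det_A A
  refine isConj_of_semiconj ⟨!![μ⁻¹ * ε⁻¹, μ⁻¹ * a; 0, μ⁻¹ * c], ?_⟩ _ _ ?_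
  · rw [Matrix.det_fin_two_of]
    field_simp [hc]; linear_combination hc
  · apply Subtype.ext
    show _ * _ = (A : Matrix (Fin 2) (Fin 2) F) * _
    rw [Matrix.eta_fin_two (A : Matrix (Fin 2) (Fin 2) F)]
    show _ * !![0, -ε; ε⁻¹, (a+d)] = !![a,b;c,d] * _
    rw [Matrix.mul_fin_two, Matrix.mul_fin_two]
    ext i j
    fin_cases i <;> fin_cases j <;> simp <;> field_simp [hc] <;>
      try ring
    linear_combination hdet


def negOne : SL2 := ⟨!![-1, 0; 0, -1], by simp [Matrix.det_fin_two_of]⟩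

lemma sq_classes {ν : F} (hν : ¬IsSquare ν) (hchar : ringChar F ≠ 2) {c : F} (hc : c ≠ 0) :
    (∃ μ ≠ (0:F), c = μ ^ 2 * 1) ∨ (∃ μ ≠ (0:F), c = μ ^ 2 * ν) := by
  have hν0 : ν ≠ 0 := by rintro rfl; exact hν ⟨0, by simp⟩
  by_cases h : IsSquare c
  · obtain ⟨r, rfl⟩ := h
    exact Or.inl ⟨r, by rintro rfl; simp at hc, by ring⟩
  · right
    have h1 : IsSquare (c * ν⁻¹) := by
      rw [FiniteField.isSquare_iff hchar (mul_ne_zero hc (inv_ne_zero hν0)), mul_pow]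
      rcases FiniteField.pow_dichotomy hchar hc with h2 | h2
      · exact absurd ((FiniteField.isSquare_iff hchar hc).2 h2) h
      rcases FiniteField.pow_dichotomy hchar (inv_ne_zero hν0) with h3 | h3
      · exact absurd (by simpa using (FiniteField.isSquare_iff hchar (inv_ne_zero hν0)).2 h3) hν
      · rw [h2, h3]; ring
    obtain ⟨r, hr⟩ := h1
    have hr0 : r ≠ 0 := by rintro rfl; simp at hr; rcases hr with h'|h' <;> simp_all
    exact ⟨r, hr0, by field_simp at hr; linear_combination hr⟩

lemma eq_one_or_negOne (A : SL2) (hb : A.1 0 1 = 0) (hc : A.1 1 0 = 0) (had : A.1 0 0 = A.1 1 1) :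
    A = 1 ∨ A = negOne := by
  have hdet : A.1 0 0 * A.1 1 1 - A.1 0 1 * A.1 1 0 = 1 := by
    rw [← Matrix.det_fin_two]; exact A.2
  rw [hb, hc, ← had] at hdet
  have : (A.1 0 0 - 1) * (A.1 0 0 + 1) = 0 := by ring_nf; linear_combination hdet
  rcases mul_eq_zero.1 this with h | h
  · left
    apply Subtype.ext
    rw [Matrix.eta_fin_two (A : Matrix (Fin 2) (Fin 2) F)]
    have h1 : A.1 0 0 = 1 := by linear_combination h
    rw [hb, hc, h1, ← had, h1, Matrix.SpecialLinearGroup.coe_one, Matrix.one_fin_two]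
  · right
    apply Subtype.ext
    rw [Matrix.eta_fin_two (A : Matrix (Fin 2) (Fin 2) F)]
    have h1 : A.1 0 0 = -1 := by linear_combination h
    rw [hb, hc, h1, ← had, h1]
    rfl

lemma negOne_comm (g : SL2) : g * negOne = negOne * g := by
  apply Subtype.ext
  show (g : Matrix (Fin 2) (Fin 2) F) * _ = _ * (g : Matrix (Fin 2) (Fin 2) F)
  rw [Matrix.eta_fin_two (g : Matrix (Fin 2) (Fin 2) F)]
  show _ * !![(-1:F),0;0,-1] = !![(-1:F),0;0,-1] * _
  rw [Matrix.mul_fin_two, Matrix.mul_fin_two]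
  ring_nf

lemma conj_central {Z A : SL2} (hZ : ∀ g : SL2, g * Z = Z * g) (h : IsConj Z A) : A = Z := by
  obtain ⟨c, hc⟩ := isConj_iff.1 h
  rw [← hc, mul_assoc, ← hZ c⁻¹, ← mul_assoc, mul_inv_cancel, one_mul]



lemma exists_conj_c_ne (A : SL2) (h1 : A ≠ 1) (h2 : A ≠ negOne) :
    ∃ B : SL2, IsConj A B ∧ (B : Matrix (Fin 2) (Fin 2) F) 1 0 ≠ 0 := by
  by_cases hc : A.1 1 0 ≠ 0
  · exact ⟨A, IsConj.refl A, hc⟩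
  push_neg at hc
  by_cases hb : A.1 0 1 ≠ 0
  · -- conjugate by J = !![0,-1;1,0]
    refine ⟨⟨!![A.1 1 1, 0; -A.1 0 1, A.1 0 0], ?_⟩, ?_, ?_⟩
    · rw [Matrix.det_fin_two_of]
      have := det_A A; rw [hc] at this; linear_combination this
    · refine isConj_of_semiconj ⟨!![0,-1;1,0], by rw [Matrix.det_fin_two_of]; ring⟩ _ _ ?_
      apply Subtype.ext
      show (!![(0:F),-1;1,0] : Matrix (Fin 2) (Fin 2) F) * A.1
          = !![A.1 1 1, 0; -A.1 0 1, A.1 0 0] * !![(0:F),-1;1,0]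
      conv_lhs => rw [Matrix.eta_fin_two (A.1)]
      rw [hc, Matrix.mul_fin_two, Matrix.mul_fin_two]
      ext i j; fin_cases i <;> fin_cases j <;> simp <;> ring
    · simpa using hb
  push_neg at hb
  -- now A is diagonal; a ≠ d since A ≠ ±1
  have had : A.1 0 0 ≠ A.1 1 1 := by
    intro had
    rcases eq_one_or_negOne A hb hc had with h | h
    · exact h1 h
    · exact h2 h
  have hdet : A.1 0 0 * A.1 1 1 = 1 := by
    have := det_A A; rw [hc] at this; linear_combination this
  refine ⟨⟨!![A.1 0 0, 0; A.1 0 0 - A.1 1 1, A.1 1 1], ?_⟩, ?_, ?_⟩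
  · rw [Matrix.det_fin_two_of]; linear_combination hdet
  · refine isConj_of_semiconj ⟨!![1,0;1,1], by rw [Matrix.det_fin_two_of]; ring⟩ _ _ ?_
    apply Subtype.ext
    show (!![(1:F),0;1,1] : Matrix (Fin 2) (Fin 2) F) * A.1
        = !![A.1 0 0, 0; A.1 0 0 - A.1 1 1, A.1 1 1] * !![(1:F),0;1,1]
    conv_lhs => rw [Matrix.eta_fin_two (A.1)]
    rw [hc, hb, Matrix.mul_fin_two, Matrix.mul_fin_two]
    ext i j; fin_cases i <;> fin_cases j <;> simp <;> ring
  · simpa [sub_eq_zero] using had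

lemma two_ne_zero' (hchar : ringChar F ≠ 2) : (2 : F) ≠ 0 := by
  intro h
  have h2 : ((2:ℕ) : F) = 0 := by exact_mod_cast h
  exact hchar (ringChar.eq_iff.mpr ((CharP.charP_iff_prime_eq_zero Nat.prime_two).mpr h2))

lemma four_ne_zero' (hchar : ringChar F ≠ 2) : (4 : F) ≠ 0 := by
  have h2 := two_ne_zero' (F := F) hchar
  intro h
  apply h2
  have : (2:F) * 2 = 0 := by rw [show (2:F)*2 = 4 by norm_num, h]
  rcases mul_eq_zero.1 this with h | h <;> exact h

lemma conj_M_one (hchar : ringChar F ≠ 2) {t ε : F} (hε : ε ≠ 0) (ht : t * t ≠ 4) :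
    IsConj (M t (1:F) one_ne_zero) (M t ε hε) := by
  have h2 : (2:F) ≠ 0 := two_ne_zero' hchar
  have h4 : (4:F) ≠ 0 := four_ne_zero' hchar
  have he : (1 : F) - t^2/4 ≠ 0 := by
    intro h
    apply ht
    field_simp at h
    linear_combination -h
  obtain ⟨u, y, huy⟩ := FiniteField.exists_root_sum_quadratic
    (f := Polynomial.X ^ 2) (g := Polynomial.C ((1:F) - t^2/4) * Polynomial.X ^ 2
      + Polynomial.C 0 * Polynomial.X + Polynomial.C (-ε⁻¹))
    (Polynomial.degree_X_pow 2) (Polynomial.degree_quadratic he)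
    (FiniteField.odd_card_of_char_ne_two hchar)
  simp only [Polynomial.eval_add, Polynomial.eval_mul, Polynomial.eval_pow,
    Polynomial.eval_X, Polynomial.eval_C, Polynomial.map_zero, zero_mul] at huy
  set x := u - t/2 * y with hx
  have key : x * x + t * x * y + y * y = ε⁻¹ := by
    rw [hx]
    field_simp at huy ⊢
    linear_combination huy
  refine isConj_of_semiconj ⟨!![ε * x, -(ε * y); y, x + t * y], ?_⟩ _ _ ?_
  · rw [Matrix.det_fin_two_of]
    have : ε * (x * x + t * x * y + y * y) = 1 := by
      rw [key]; field_simp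
    linear_combination this
  · apply Subtype.ext
    show _ * (M t (1:F) one_ne_zero).1 = (M t ε hε).1 * _
    show _ * !![0, -(1:F); 1⁻¹, t] = !![0, -ε; ε⁻¹, t] * _
    rw [inv_one, Matrix.mul_fin_two, Matrix.mul_fin_two]
    ext i j; fin_cases i <;> fin_cases j <;> simp <;> (try field_simp) <;> (try ring)

lemma not_conj_M_nu (hchar : ringChar F ≠ 2) {t ν : F} (hν : ¬IsSquare ν) (hν0 : ν ≠ 0)
    (ht : t * t = 4) : ¬ IsConj (M t (1:F) one_ne_zero) (M t ν hν0) := by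
  intro h
  obtain ⟨c, hc⟩ := isConj_iff.1 h
  have h4 : (4:F) ≠ 0 := four_ne_zero' hchar
  have hinv : ν * ν⁻¹ = 1 := mul_inv_cancel₀ hν0
  have hm : c * (M t (1:F) one_ne_zero) = (M t ν hν0) * c := by
    rw [← hc, mul_assoc, mul_assoc, inv_mul_cancel, mul_one]
  have hmm : (c : Matrix (Fin 2) (Fin 2) F) * !![0, -(1:F); 1⁻¹, t]
      = !![0, -ν; ν⁻¹, t] * (c : Matrix (Fin 2) (Fin 2) F) := congrArg Subtype.val hm
  rw [inv_one] at hmm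
  set p := c.1 0 0; set q := c.1 0 1; set r := c.1 1 0; set s := c.1 1 1
  have hdet : p * s - q * r = 1 := det_A c
  have e00 : q = -ν * r := by
    have := congrFun (congrFun hmm 0) 0
    simp [Matrix.mul_apply, Fin.sum_univ_two] at this
    linear_combination this
  have e10 : s = ν⁻¹ * p + t * r := by
    have := congrFun (congrFun hmm 1) 0
    simp [Matrix.mul_apply, Fin.sum_univ_two] at this
    linear_combination this
  have hp : p = ν * s - t * ν * r := by
    linear_combination (-ν) * e10 + (-p) * hinv
  have key : ν * (2 * s - t * r) ^ 2 = 4 := by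
    linear_combination (ν*r^2) * ht + (-4*s)*hp + 4*hdet + 4*r*e00
  have hw : 2 * s - t * r ≠ 0 := by
    intro hw; rw [hw] at key; simp at key; exact h4 key.symm
  refine hν ⟨(2 * s - t * r)⁻¹ * 2, ?_⟩
  field_simp
  linear_combination key

lemma trace_M (t ε : F) (hε : ε ≠ 0) :
    Matrix.trace ((M t ε hε) : Matrix (Fin 2) (Fin 2) F) = t := by
  simp [M, Matrix.trace_fin_two_of]

lemma trace_conj {A B : SL2} (h : IsConj A B) :
    Matrix.trace (A : Matrix (Fin 2) (Fin 2) F) = Matrix.trace (B : Matrix (Fin 2) (Fin 2) F) := by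
  obtain ⟨c, hc⟩ := isConj_iff.1 h
  have hC : (c : Matrix (Fin 2) (Fin 2) F) * A * (c⁻¹ : SL2) = B := by
    rw [← hc]; simp [Matrix.SpecialLinearGroup.coe_mul]
  rw [← hC, Matrix.trace_mul_comm, ← mul_assoc]
  have h1 : ((c⁻¹ : SL2) : Matrix (Fin 2) (Fin 2) F) * c = 1 := by
    rw [← Matrix.SpecialLinearGroup.coe_mul, inv_mul_cancel, Matrix.SpecialLinearGroup.coe_one]
  rw [h1, one_mul]

lemma trace_one' : Matrix.trace ((1 : SL2) : Matrix (Fin 2) (Fin 2) F) = 2 := by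
  rw [Matrix.SpecialLinearGroup.coe_one]
  simp [Matrix.trace_one]

lemma trace_negOne : Matrix.trace ((negOne : SL2) : Matrix (Fin 2) (Fin 2) F) = -2 := by
  show Matrix.trace !![(-1:F),0;0,-1] = -2
  rw [Matrix.trace_fin_two_of]; ring

lemma one_comm (g : SL2) : g * 1 = 1 * g := by rw [mul_one, one_mul]

/-- classification index type -/
abbrev Idx (F : Type*) [Field F] : Type _ := {t : F // t * t ≠ 4} ⊕ (Bool × Fin 3)

/-- representatives -/
def repX (ν : F) (hν0 : ν ≠ 0) : Idx F → SL2
  | .inl ⟨t, _⟩ => M t 1 one_ne_zero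
  | .inr (s, ⟨0, _⟩) => if s then 1 else negOne
  | .inr (s, ⟨1, _⟩) => M (if s then 2 else -2) 1 one_ne_zero
  | .inr (s, ⟨2, _⟩) => M (if s then 2 else -2) ν hν0
  | .inr (_, ⟨n+3, h⟩) => absurd h (by omega)

lemma sgn_sq (s : Bool) : ((if s then (2:F) else -2) * (if s then (2:F) else -2)) = 4 := by
  cases s <;> norm_num

lemma M_ne_one_negOne {t ε : F} (hε : ε ≠ 0) (Z : SL2)
    (hZ : Z = 1 ∨ Z = negOne) : ¬ (M t ε hε = Z) := by
  intro h
  apply hε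
  have h' := congrFun (congrFun (congrArg Subtype.val h) 0) 1
  have hM : (M t ε hε).1 0 1 = -ε := by
    show (!![0,-ε;ε⁻¹,t]) 0 1 = -ε; simp
  rcases hZ with rfl | rfl
  · rw [hM, Matrix.SpecialLinearGroup.coe_one] at h'
    simp at h'
    exact h'
  · rw [hM] at h'
    have hz : (negOne : SL2).1 0 1 = 0 := by
      show (!![(-1:F),0;0,-1]) 0 1 = 0; simp
    rw [hz] at h'
    exact neg_eq_zero.mp h'

lemma two_ne_neg_two (hchar : ringChar F ≠ 2) : (2 : F) ≠ -2 := by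
  intro h
  apply four_ne_zero' (F := F) hchar
  linear_combination h

lemma one_ne_negOne (hchar : ringChar F ≠ 2) : (1 : SL2) ≠ negOne := by
  intro h
  have h' := congrFun (congrFun (congrArg Subtype.val h) 0) 0
  rw [Matrix.SpecialLinearGroup.coe_one] at h'
  have hz : (negOne : SL2).1 0 0 = -1 := by
    show (!![(-1:F),0;0,-1]) 0 0 = -1; simp
  rw [hz] at h'
  simp at h'
  exact two_ne_neg_two (F := F) hchar (by linear_combination 2 * h')

lemma central_cases {Z A : SL2} (hZ : Z = 1 ∨ Z = negOne) (h : IsConj Z A) : A = Z := by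
  rcases hZ with rfl | rfl
  · exact conj_central one_comm h
  · exact conj_central negOne_comm h

lemma repX_injective {ν : F} (hchar : ringChar F ≠ 2) (hν : ¬IsSquare ν) (hν0 : ν ≠ 0)
    {x y : Idx F} (h : IsConj (repX ν hν0 x) (repX ν hν0 y)) : x = y := by
  have htr := trace_conj h
  have h24 := two_ne_neg_two (F := F) hchar
  rcases x with ⟨t, ht⟩ | ⟨s, ⟨k, hk⟩⟩ <;> rcases y with ⟨t', ht'⟩ | ⟨s', ⟨k', hk'⟩⟩
  · -- inl / inl
    simp only [repX, trace_M] at htr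
    subst htr; rfl
  · -- inl / inr
    interval_cases k'
    · exfalso
      have hA : repX ν hν0 (Sum.inr ((s' : Bool), ⟨0, hk'⟩)) = 1 ∨ repX ν hν0 (Sum.inr ((s' : Bool), ⟨0, hk'⟩)) = negOne := by
        cases s'
        · exact Or.inr rfl
        · exact Or.inl rfl
      have := central_cases (Z := repX ν hν0 (Sum.inr (s', ⟨0, hk'⟩)))
        (A := repX ν hν0 (Sum.inl ⟨t, ht⟩)) hA h.symm
      exact M_ne_one_negOne one_ne_zero _ hA this
    · exfalso
      simp only [repX, trace_M] at htr
      subst htr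
      exact ht (sgn_sq s')
    · exfalso
      simp only [repX, trace_M] at htr
      subst htr
      exact ht (sgn_sq s')
  · -- inr / inl : symmetric
    interval_cases k
    · exfalso
      have hA : repX ν hν0 (Sum.inr ((s : Bool), ⟨0, hk⟩)) = 1 ∨ repX ν hν0 (Sum.inr ((s : Bool), ⟨0, hk⟩)) = negOne := by
        cases s
        · exact Or.inr rfl
        · exact Or.inl rfl
      have := central_cases hA h
      exact M_ne_one_negOne one_ne_zero _ hA this
    · exfalso
      simp only [repX, trace_M] at htr
      rw [← htr] at ht'
      exact ht' (sgn_sq s)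
    · exfalso
      simp only [repX, trace_M] at htr
      rw [← htr] at ht'
      exact ht' (sgn_sq s)
  · -- inr / inr
    have hss : ∀ (hs : (if s then (2:F) else -2) = (if s' then (2:F) else -2)), s = s' := by
      intro hs
      cases s <;> cases s' <;> simp only [Bool.false_eq_true, if_false, eq_self_iff_true, if_true] at hs <;>
        first
          | rfl
          | exact absurd (by linear_combination hs : (2:F) = -2) h24
          | exact absurd (by linear_combination -hs : (2:F) = -2) h24
    interval_cases k <;> interval_cases k'
    · -- 0,0 : central vs central
      have hA : repX ν hν0 (Sum.inr ((s' : Bool), ⟨0, hk'⟩)) = 1 ∨ repX ν hν0 (Sum.inr ((s' : Bool), ⟨0, hk'⟩)) = negOne := by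
        cases s'
        · exact Or.inr rfl
        · exact Or.inl rfl
      have heq := central_cases hA h.symm
      simp only [repX] at heq
      have : s = s' := by
        cases s <;> cases s' <;> simp only [Bool.false_eq_true, if_false, eq_self_iff_true, if_true] at heq <;>
          first
            | rfl
            | exact absurd heq (one_ne_negOne hchar)
            | exact absurd heq.symm (one_ne_negOne hchar)
      subst this; rfl
    · exfalso
      have hA : repX ν hν0 (Sum.inr ((s : Bool), ⟨0, hk⟩)) = 1 ∨ repX ν hν0 (Sum.inr ((s : Bool), ⟨0, hk⟩)) = negOne := by
        cases s
        · exact Or.inr rfl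
        · exact Or.inl rfl
      have := central_cases hA h
      simp only [repX] at this
      exact M_ne_one_negOne one_ne_zero _ hA this
    · exfalso
      have hA : repX ν hν0 (Sum.inr ((s : Bool), ⟨0, hk⟩)) = 1 ∨ repX ν hν0 (Sum.inr ((s : Bool), ⟨0, hk⟩)) = negOne := by
        cases s
        · exact Or.inr rfl
        · exact Or.inl rfl
      have := central_cases hA h
      simp only [repX] at this
      exact M_ne_one_negOne hν0 _ hA this
    · exfalso
      have hA : repX ν hν0 (Sum.inr ((s' : Bool), ⟨0, hk'⟩)) = 1 ∨ repX ν hν0 (Sum.inr ((s' : Bool), ⟨0, hk'⟩)) = negOne := by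
        cases s'
        · exact Or.inr rfl
        · exact Or.inl rfl
      have := central_cases hA h.symm
      simp only [repX] at this
      exact M_ne_one_negOne one_ne_zero _ hA this
    · -- 1,1
      simp only [repX, trace_M] at htr
      rw [hss htr]
    · -- 1,2 : impossible
      exfalso
      simp only [repX, trace_M] at htr
      have hs := hss htr
      subst hs
      exact not_conj_M_nu hchar hν hν0 (sgn_sq s) (by simpa only [repX] using h)
    · exfalso
      have hA : repX ν hν0 (Sum.inr ((s' : Bool), ⟨0, hk'⟩)) = 1 ∨ repX ν hν0 (Sum.inr ((s' : Bool), ⟨0, hk'⟩)) = negOne := by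
        cases s'
        · exact Or.inr rfl
        · exact Or.inl rfl
      have := central_cases hA h.symm
      simp only [repX] at this
      exact M_ne_one_negOne hν0 _ hA this
    · -- 2,1 : impossible
      exfalso
      simp only [repX, trace_M] at htr
      have hs := hss htr
      subst hs
      exact not_conj_M_nu hchar hν hν0 (sgn_sq s) (by simpa only [repX] using h.symm)
    · -- 2,2
      simp only [repX, trace_M] at htr
      rw [hss htr]

lemma repX_surjective {ν : F} (hchar : ringChar F ≠ 2) (hν : ¬IsSquare ν) (hν0 : ν ≠ 0)
    (A : SL2) : ∃ x : Idx F, IsConj (repX ν hν0 x) A := by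
  by_cases h1 : A = 1
  · refine ⟨Sum.inr (true, ⟨0, by omega⟩), ?_⟩
    rw [h1]
    show IsConj (if true then (1:SL2) else negOne) 1
    rw [if_pos rfl]
  by_cases h2 : A = negOne
  · refine ⟨Sum.inr (false, ⟨0, by omega⟩), ?_⟩
    rw [h2]
    show IsConj (if false then (1:SL2) else negOne) negOne
    rw [if_neg (by decide)]
  obtain ⟨B, hAB, hc⟩ := exists_conj_c_ne A h1 h2
  set t := B.1 0 0 + B.1 1 1 with htdef
  have hsgn : ∀ ht : t * t = 4, ∃ s : Bool, (if s then (2:F) else -2) = t := by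
    intro ht
    by_cases ht2 : t = 2
    · exact ⟨true, by simp [ht2]⟩
    · refine ⟨false, ?_⟩
      have hf : (t - 2) * (t + 2) = 0 := by linear_combination ht
      rcases mul_eq_zero.1 hf with h | h
      · exact absurd (by linear_combination h) ht2
      · simp only [Bool.false_eq_true, if_false]
        linear_combination -h
  rcases sq_classes hν hchar hc with ⟨μ, hμ, hcq⟩ | ⟨μ, hμ, hcq⟩
  · have hM : IsConj (M t (1:F) one_ne_zero) A :=
      (conj_M_of_sq B hμ one_ne_zero hcq).trans hAB.symm
    by_cases ht : t * t = 4
    · obtain ⟨s, hs⟩ := hsgn ht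
      refine ⟨Sum.inr (s, ⟨1, by omega⟩), ?_⟩
      show IsConj (M (if s then (2:F) else -2) 1 one_ne_zero) A
      rw [hs]; exact hM
    · exact ⟨Sum.inl ⟨t, ht⟩, hM⟩
  · have hM : IsConj (M t ν hν0) A :=
      (conj_M_of_sq B hμ hν0 hcq).trans hAB.symm
    by_cases ht : t * t = 4
    · obtain ⟨s, hs⟩ := hsgn ht
      refine ⟨Sum.inr (s, ⟨2, by omega⟩), ?_⟩
      show IsConj (M (if s then (2:F) else -2) ν hν0) A
      rw [hs]; exact hM
    · exact ⟨Sum.inl ⟨t, ht⟩, (conj_M_one hchar hν0 ht).trans hM⟩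

end SL2Conj

theorem conjClasses_SL2 (F : Type*) [Field F] [Fintype F]
    (hodd : Odd (Fintype.card F)) :
    Nat.card (ConjClasses (Matrix.SpecialLinearGroup (Fin 2) F)) =
      Fintype.card F + 4 := by
  classical
  have hchar : ringChar F ≠ 2 := by
    intro h
    have := FiniteField.even_card_iff_char_two.mp h
    rw [Nat.odd_iff] at hodd
    omega
  obtain ⟨ν, hν⟩ := FiniteField.exists_nonsquare (F := F) hchar
  have hν0 : ν ≠ 0 := fun h => hν (h ▸ ⟨0, by simp⟩)
  have hbij : Function.Bijective
      (fun x : SL2Conj.Idx F => ConjClasses.mk (SL2Conj.repX ν hν0 x)) := by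
    constructor
    · intro x y hxy
      exact SL2Conj.repX_injective hchar hν hν0 (ConjClasses.mk_eq_mk_iff_isConj.1 hxy)
    · intro q
      obtain ⟨A, rfl⟩ := ConjClasses.exists_rep q
      obtain ⟨x, hx⟩ := SL2Conj.repX_surjective hchar hν hν0 A
      exact ⟨x, ConjClasses.mk_eq_mk_iff_isConj.2 hx⟩
  have hcard := Nat.card_congr (Equiv.ofBijective _ hbij)
  rw [← hcard]
  have h24 : (2:F) ≠ -2 := SL2Conj.two_ne_neg_two hchar
  have hset : (Finset.univ.filter (fun t : F => t * t = 4)) = {2, -2} := by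
    ext t
    simp only [Finset.mem_filter, Finset.mem_univ, true_and, Finset.mem_insert,
      Finset.mem_singleton]
    constructor
    · intro h
      have hf : (t - 2) * (t + 2) = 0 := by linear_combination h
      rcases mul_eq_zero.1 hf with h | h
      · left; linear_combination h
      · right; linear_combination h
    · rintro (rfl | rfl) <;> norm_num
  have hcard1 : Nat.card {t : F // t * t ≠ 4} = Fintype.card F - 2 := by
    rw [Nat.card_eq_fintype_card, Fintype.card_subtype]
    have hfn : Finset.filter (fun t : F => t * t ≠ 4) Finset.univ
        = Finset.univ \ ({2, -2} : Finset F) := by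
      rw [← hset, Finset.filter_not]
    rw [hfn, Finset.card_sdiff_of_subset (Finset.subset_univ _), Finset.card_univ, Finset.card_pair h24]
  have hq : 1 < Fintype.card F := Fintype.one_lt_card
  have : Nat.card (SL2Conj.Idx F)
      = Nat.card {t : F // t * t ≠ 4} + Nat.card (Bool × Fin 3) := Nat.card_sum
  rw [this, hcard1]
  have : Nat.card (Bool × Fin 3) = 6 := by
    simp [Nat.card_eq_fintype_card]
  rw [this]
  omega
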